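/- Assume F¹ > 0, v₀ > 0, f_p(v₀) < f₀(v₀) and Δd > 0, and let ṽ = v₀(1 + √(1 − F_p¹/F¹ + ΔF⁰/(F¹v₀))). Then ṽ > v₀ and f_r attains its global minimum over the open interval (v₀, ∞) at ṽ, i.e., f_r(ṽ) ≤ f_r(v) for every v > v₀. -/

import Mathlib

/-- The rendezvous-speed-dependent part of the coordination follower's fuel
cost: `f_r(v) = (F¹v − F_p¹v₀ + ΔF⁰) · (v/(v − v₀)) · Δd`. -/
noncomputable def fr (F1 Fp1 ΔF0 v0 Δd v : ℝ) : ℝ :=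
  (F1 * v - Fp1 * v0 + ΔF0) * (v / (v - v0)) * Δd

/-- Assume `F¹ > 0`, `v₀ > 0`, `f_p(v₀) < f₀(v₀)` and `Δd > 0`,
and let `ṽ = v₀(1 + √(1 − F_p¹/F¹ + ΔF⁰/(F¹v₀)))`. Then `ṽ > v₀` and `f_r`
attains its global minimum over `(v₀, ∞)` at `ṽ`. -/
theorem fr_global_min_speedup (F1 F0 Fp1 Fp0 v0 Δd : ℝ)
    (hF1 : 0 < F1) (hv0 : 0 < v0)
    (hfuel : Fp1 * v0 + Fp0 < F1 * v0 + F0) (hΔd : 0 < Δd) :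
    v0 < v0 * (1 + Real.sqrt (1 - Fp1 / F1 + (F0 - Fp0) / (F1 * v0))) ∧
    ∀ v : ℝ, v0 < v →
      fr F1 Fp1 (F0 - Fp0) v0 Δd
          (v0 * (1 + Real.sqrt (1 - Fp1 / F1 + (F0 - Fp0) / (F1 * v0)))) ≤
        fr F1 Fp1 (F0 - Fp0) v0 Δd v := by
  set E : ℝ := 1 - Fp1 / F1 + (F0 - Fp0) / (F1 * v0) with hE
  have hEpos : 0 < E := by
    rw [hE]
    have h1 : Fp1 / F1 - (F0 - Fp0) / (F1 * v0) < 1 := by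
      rw [div_sub_div _ _ (ne_of_gt hF1) (by positivity : (F1 * v0) ≠ 0)]
      rw [div_lt_one (by positivity)]
      nlinarith
    linarith
  set s : ℝ := Real.sqrt E with hsdef
  have hspos : 0 < s := Real.sqrt_pos.mpr hEpos
  have hs2 : s ^ 2 = E := Real.sq_sqrt hEpos.le
  have hkey : F1 * v0 * s ^ 2 = F1 * v0 - Fp1 * v0 + (F0 - Fp0) := by
    rw [hs2, hE]
    field_simp
  have hgt : v0 < v0 * (1 + s) := by nlinarith
  refine ⟨hgt, fun v hv => ?_⟩
  have htv : (0:ℝ) < v0 * (1 + s) - v0 := by linarith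
  have htv' : v0 * (1 + s) - v0 = v0 * s := by ring
  have hvd : (0:ℝ) < v - v0 := by linarith
  have hval : fr F1 Fp1 (F0 - Fp0) v0 Δd (v0 * (1 + s)) = F1 * v0 * (1 + s) ^ 2 * Δd := by
    unfold fr
    rw [htv']
    have hns : v0 * s ≠ 0 := by positivity
    field_simp
    linear_combination (-1 : ℝ) * hkey
  rw [hval]
  unfold fr
  have hrw : (F1 * v - Fp1 * v0 + (F0 - Fp0)) * (v / (v - v0)) * Δd
      = ((F1 * v - Fp1 * v0 + (F0 - Fp0)) * v * Δd) / (v - v0) := by ring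
  rw [hrw, le_div_iff₀ hvd]
  have h2 : F1 * v0 * s ^ 2 * (v * Δd) = (F1 * v0 - Fp1 * v0 + (F0 - Fp0)) * (v * Δd) := by
    rw [hkey]
  nlinarith [h2, mul_nonneg (mul_pos hΔd hF1).le (sq_nonneg (v - v0 * (1 + s)))]
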